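/- Let N be a Δ-net of a finite metric space (X, d) with |X| ≥ 2. Then |N| ≤ ⌈(2/Δ)·w(MST(X))⌉, where w(MST(X)) is the weight of a minimum spanning tree of X. -/

import Mathlib

open scoped Classical

/-- The weight of a minimum spanning tree of the finite space `X` with
distance function `d`. -/
noncomputable def mstWeight (X : Type*) [Fintype X] (d : X → X → ℝ) : ℝ :=
  sInf {w : ℝ | ∃ G : SimpleGraph X, G.IsTree ∧
    w = (∑ p : X × X, if G.Adj p.1 p.2 then d p.1 p.2 else 0) / 2}

section Aux

variable {X : Type*}

/-- The star graph centered at `v0`. -/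
@[reducible] def starGraph (v0 : X) : SimpleGraph X where
  Adj a b := a ≠ b ∧ (a = v0 ∨ b = v0)
  symm := ⟨fun a b h => ⟨h.1.symm, h.2.symm⟩⟩
  loopless := ⟨fun a h => h.1 rfl⟩

lemma starGraph_isTree (v0 : X) : (starGraph v0).IsTree := by
  constructor
  · -- connected
    have key : ∀ c : X, (starGraph v0).Reachable c v0 := by
      intro c
      by_cases hc : c = v0
      · exact hc ▸ SimpleGraph.Reachable.refl _
      · exact SimpleGraph.Adj.reachable ⟨hc, Or.inr rfl⟩
    haveI : Nonempty X := ⟨v0⟩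
    exact ⟨fun a b => (key a).trans (key b).symm⟩
  · -- acyclic
    intro a c hc
    cases c with
    | nil => exact hc.not_of_nil
    | cons hadj q =>
      rename_i b
      rw [SimpleGraph.Walk.cons_isCycle_iff] at hc
      obtain ⟨hq, hedge⟩ := hc
      by_cases ha : a = v0
      · -- a = v0, so b ≠ v0; first edge of q must be s(b, v0) = s(a, b)
        have hb : b ≠ v0 := fun h => hadj.1 (ha.trans h.symm)
        cases q with
        | nil => exact hb ha
        | cons hadj2 r =>
          rename_i x
          have hx : x = v0 := by
            rcases hadj2.2 with h | h
            · exact absurd h hb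
            · exact h
          apply hedge
          rw [SimpleGraph.Walk.edges_cons]
          have : s(a, b) = s(b, x) := by rw [ha, hx, Sym2.eq_swap]
          rw [this]
          exact List.mem_cons_self
      · -- a ≠ v0, so b = v0
        have hb : b = v0 := by
          rcases hadj.2 with h | h
          · exact absurd h ha
          · exact h
        cases q with
        | nil =>
          exact (hadj.1 rfl).elim
        | cons hadj2 r =>
          rename_i x
          rw [SimpleGraph.Walk.cons_isPath_iff] at hq
          obtain ⟨hr, hbr⟩ := hq
          by_cases hx : x = a
          · apply hedge
            rw [SimpleGraph.Walk.edges_cons]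
            have : s(a, b) = s(b, x) := by rw [hx, Sym2.eq_swap]
            rw [this]
            exact List.mem_cons_self
          · have hxv : x ≠ v0 := by
              intro h
              exact hbr ((hb.trans h.symm) ▸ r.start_mem_support)
            cases r with
            | nil => exact hx rfl
            | cons hadj3 r' =>
              rename_i y
              have hy : y = v0 := by
                rcases hadj3.2 with h | h
                · exact absurd h hxv
                · exact h
              apply hbr
              rw [SimpleGraph.Walk.support_cons]
              exact List.mem_cons_of_mem _ ((hb.trans hy.symm) ▸ r'.start_mem_support)

/-- `min · c` is 1-Lipschitz. -/
lemma abs_min_sub_min_le (a b c : ℝ) : |min a c - min b c| ≤ |a - b| := by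
  have h1 : a - b ≤ |a - b| := le_abs_self _
  have h2 : b - a ≤ |a - b| := by
    rw [abs_sub_comm]; exact le_abs_self _
  rw [abs_sub_le_iff]
  constructor <;>
    (rcases min_cases a c with ⟨h3, h4⟩ | ⟨h3, h4⟩ <;>
     rcases min_cases b c with ⟨h5, h6⟩ | ⟨h5, h6⟩ <;> linarith)

/-- Telescoping along a walk. -/
lemma walk_telescope {G : SimpleGraph X} (h : X → ℝ) {a b : X} (p : G.Walk a b) :
    |h a - h b| ≤ (p.darts.map (fun d => |h d.toProd.1 - h d.toProd.2|)).sum := by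
  induction p with
  | nil => simp
  | cons ha p ih =>
    rename_i u v w
    simp only [SimpleGraph.Walk.darts_cons, List.map_cons, List.sum_cons]
    calc |h u - h w| ≤ |h u - h v| + |h v - h w| := abs_sub_le _ _ _
      _ ≤ |h u - h v| + (p.darts.map (fun d => |h d.toProd.1 - h d.toProd.2|)).sum := by
          exact add_le_add (le_refl _) ih
      _ = _ := rfl

/-- In a tree, twice the variation of `h` between two vertices is bounded by the total
variation over all (ordered) edges. -/
lemma tree_double_bound [Fintype X] {G : SimpleGraph X} (hG : G.IsTree) (h : X → ℝ)
    (u v : X) :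
    2 * |h u - h v| ≤ ∑ p : X × X, (if G.Adj p.1 p.2 then |h p.1 - h p.2| else 0) := by
  classical
  set g : X × X → ℝ := fun q => if G.Adj q.1 q.2 then |h q.1 - h q.2| else 0 with hg
  have hgnn : ∀ q : X × X, 0 ≤ g q := by
    intro q
    simp only [hg]
    split
    · exact abs_nonneg _
    · exact le_rfl
  obtain ⟨w0⟩ := hG.isConnected.preconnected u v
  set p : G.Walk u v := (SimpleGraph.Walk.toPath w0).1 with hp
  have hpath : p.IsPath := (SimpleGraph.Walk.toPath w0).2
  have hedges : p.edges.Nodup := hpath.edges_nodup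
  have hdarts : p.darts.Nodup := by
    have : (p.darts.map SimpleGraph.Dart.edge).Nodup := hedges
    exact this.of_map _
  set l1 : List (X × X) := p.darts.map SimpleGraph.Dart.toProd with hl1
  set l2 : List (X × X) := p.reverse.darts.map SimpleGraph.Dart.toProd with hl2
  have hl1nd : l1.Nodup := hdarts.map SimpleGraph.Dart.toProd_injective
  have hrevdarts : p.reverse.darts.Nodup := by
    have : (p.reverse.darts.map SimpleGraph.Dart.edge).Nodup :=
      hpath.reverse.edges_nodup
    exact this.of_map _
  have hl2nd : l2.Nodup := hrevdarts.map SimpleGraph.Dart.toProd_injective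
  have hdisj : ∀ q ∈ l1, q ∉ l2 := by
    intro q hq1 hq2
    obtain ⟨d, hd, rfl⟩ := List.mem_map.mp hq1
    obtain ⟨e, he, hde⟩ := List.mem_map.mp hq2
    have he' : e.symm ∈ p.darts := SimpleGraph.Walk.mem_darts_reverse.mp he
    have hed : e = d := SimpleGraph.Dart.toProd_injective hde
    subst hed
    have hsame : e.symm.edge = e.edge := SimpleGraph.Dart.edge_symm e
    have : e.symm = e := by
      have hinj := List.inj_on_of_nodup_map (f := SimpleGraph.Dart.edge)
        (l := p.darts) hedges
      exact hinj he' hd hsame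
    have := congrArg (fun d : G.Dart => d.toProd.1) this
    simp only [SimpleGraph.Dart.symm_toProd, Prod.fst_swap] at this
    exact e.fst_ne_snd this.symm
  have hLnd : (l1 ++ l2).Nodup := List.Nodup.append hl1nd hl2nd hdisj
  -- each list sums to at least |h u - h v|
  have hsum1 : |h u - h v| ≤ (l1.map g).sum := by
    have : l1.map g = p.darts.map (fun d => |h d.toProd.1 - h d.toProd.2|) := by
      rw [hl1, List.map_map]
      apply List.map_congr_left
      intro d _
      simp only [Function.comp, hg, if_pos d.adj]
    rw [this]
    exact walk_telescope h p
  have hsum2 : (l2.map g).sum = (l1.map g).sum := by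
    rw [hl2, hl1, SimpleGraph.Walk.darts_reverse, List.map_map, List.map_map,
      List.map_reverse, List.sum_reverse, List.map_map]
    congr 1
    apply List.map_congr_left
    intro d _
    simp only [Function.comp, SimpleGraph.Dart.symm_toProd, Prod.fst_swap, Prod.snd_swap, hg]
    by_cases hd : G.Adj d.toProd.1 d.toProd.2
    · rw [if_pos hd, if_pos hd.symm, abs_sub_comm]
    · rw [if_neg hd, if_neg (fun h' => hd h'.symm)]
  calc 2 * |h u - h v| = |h u - h v| + |h u - h v| := by ring
    _ ≤ (l1.map g).sum + (l2.map g).sum := by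
        rw [hsum2]; exact add_le_add hsum1 hsum1
    _ = ((l1 ++ l2).map g).sum := by rw [List.map_append, List.sum_append]
    _ = ∑ q ∈ (l1 ++ l2).toFinset, g q := (List.sum_toFinset _ hLnd).symm
    _ ≤ ∑ q : X × X, g q := by
        apply Finset.sum_le_sum_of_subset_of_nonneg (Finset.subset_univ _)
        intro q _ _
        exact hgnn q

end Aux

/-- If `N` is a `Δ`-net of a finite metric space `X` with at least two points,
then `|N| ≤ ⌈(2/Δ)·w(MST(X))⌉`. -/
theorem stmt_3 (X : Type*) [MetricSpace X] [Fintype X] (hX : 2 ≤ Fintype.card X)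
    (Δ : ℝ) (hΔ : 0 < Δ) (N : Finset X)
    (hpack : ∀ u ∈ N, ∀ v ∈ N, u ≠ v → Δ < dist u v)
    (hcover : ∀ x : X, ∃ u ∈ N, dist x u ≤ Δ) :
    N.card ≤ ⌈(2 / Δ) * mstWeight X (fun a b => dist a b)⌉₊ := by
  classical
  have hX1 : Nonempty X := by
    rw [← Fintype.card_pos_iff]; omega
  obtain ⟨v0⟩ := hX1
  set S : Set ℝ := {w : ℝ | ∃ G : SimpleGraph X, G.IsTree ∧
    w = (∑ p : X × X, if G.Adj p.1 p.2 then dist p.1 p.2 else 0) / 2} with hS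
  have hSdef : mstWeight X (fun a b => dist a b) = sInf S := rfl
  -- S is nonempty
  have hne : S.Nonempty :=
    ⟨_, starGraph v0, starGraph_isTree v0, rfl⟩
  -- S is finite
  have hfinG : Finite (SimpleGraph X) :=
    Finite.of_injective (fun G : SimpleGraph X => G.Adj)
      (fun G H h => SimpleGraph.ext h)
  have hfin : S.Finite := by
    apply Set.Finite.subset
      (Set.finite_range (fun G : SimpleGraph X =>
        (∑ p : X × X, if G.Adj p.1 p.2 then dist p.1 p.2 else 0) / 2))
    rintro w ⟨G, _, rfl⟩
    exact ⟨G, rfl⟩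
  have hmem : sInf S ∈ S := hne.csInf_mem hfin
  obtain ⟨G, hG, hGeq⟩ := hmem
  set W2 : ℝ := ∑ p : X × X, if G.Adj p.1 p.2 then dist p.1 p.2 else 0 with hW2
  have hW2nn : ∀ q : X × X, 0 ≤ (if G.Adj q.1 q.2 then dist q.1 q.2 else 0) := by
    intro q; split
    · exact dist_nonneg
    · exact le_rfl
  rw [hSdef, hGeq]
  -- near-point uniqueness
  have near : ∀ u ∈ N, ∀ v ∈ N, ∀ z : X, dist u z < Δ / 2 → dist v z < Δ / 2 → u = v := by
    intro u hu v hv z h1 h2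
    by_contra hne'
    have h3 := hpack u hu v hv hne'
    have h4 : dist u v ≤ dist u z + dist z v := dist_triangle u z v
    have h5 : dist z v = dist v z := dist_comm z v
    linarith
  -- per-edge bound
  have edge_bound : ∀ x y : X,
      ∑ u ∈ N, |min (dist u x) (Δ / 2) - min (dist u y) (Δ / 2)| ≤ dist x y := by
    intro x y
    set f : X → ℝ := fun u => |min (dist u x) (Δ / 2) - min (dist u y) (Δ / 2)| with hf
    have hfd : ∀ u : X, f u ≤ dist x y := by
      intro u
      calc f u ≤ |dist u x - dist u y| := abs_min_sub_min_le _ _ _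
        _ = |dist x u - dist y u| := by rw [dist_comm u x, dist_comm u y]
        _ ≤ dist x y := abs_dist_sub_le x y u
    set A : Finset X := N.filter (fun u => dist u x < Δ / 2) with hA
    set B : Finset X := N.filter (fun u => dist u y < Δ / 2) with hB
    have hAcard : A.card ≤ 1 := by
      apply Finset.card_le_one.2
      intro a ha b hb
      rw [hA, Finset.mem_filter] at ha hb
      exact near a ha.1 b hb.1 x ha.2 hb.2
    have hBcard : B.card ≤ 1 := by
      apply Finset.card_le_one.2
      intro a ha b hb
      rw [hB, Finset.mem_filter] at ha hb
      exact near a ha.1 b hb.1 y ha.2 hb.2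
    have hzero : ∀ u ∈ N, u ∉ A ∪ B → f u = 0 := by
      intro u hu hnu
      rw [Finset.mem_union] at hnu
      push_neg at hnu
      obtain ⟨hnA, hnB⟩ := hnu
      have h1 : ¬ dist u x < Δ / 2 := fun h => hnA (Finset.mem_filter.2 ⟨hu, h⟩)
      have h2 : ¬ dist u y < Δ / 2 := fun h => hnB (Finset.mem_filter.2 ⟨hu, h⟩)
      push_neg at h1 h2
      simp only [hf, min_eq_right h1, min_eq_right h2, sub_self, abs_zero]
    have hsub : A ∪ B ⊆ N := by
      apply Finset.union_subset <;> exact Finset.filter_subset _ _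
    have hEq : ∑ u ∈ N, f u = ∑ u ∈ A ∪ B, f u :=
      (Finset.sum_subset hsub hzero).symm
    rw [hEq]
    rcases Finset.eq_empty_or_nonempty A with hAe | hAne
    · rcases Finset.eq_empty_or_nonempty B with hBe | hBne
      · rw [hAe, hBe]; simpa using dist_nonneg
      · obtain ⟨v, hv⟩ := hBne
        have hBv : B = {v} := Finset.eq_singleton_iff_unique_mem.2
          ⟨hv, fun w hw => Finset.card_le_one.1 hBcard w hw v hv⟩
        rw [hAe, hBv]
        simpa using hfd v
    · obtain ⟨u, hu⟩ := hAne
      have hAu : A = {u} := Finset.eq_singleton_iff_unique_mem.2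
        ⟨hu, fun w hw => Finset.card_le_one.1 hAcard w hw u hu⟩
      rcases Finset.eq_empty_or_nonempty B with hBe | hBne
      · rw [hAu, hBe]
        simpa using hfd u
      · obtain ⟨v, hv⟩ := hBne
        have hBv : B = {v} := Finset.eq_singleton_iff_unique_mem.2
          ⟨hv, fun w hw => Finset.card_le_one.1 hBcard w hw v hv⟩
        by_cases huv : u = v
        · rw [hAu, hBv, ← huv, Finset.union_idempotent]
          simpa using hfd u
        · rw [hAu, hBv]
          have hsum : ∑ w ∈ ({u} : Finset X) ∪ {v}, f w = f u + f v := by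
            rw [Finset.sum_union (Finset.disjoint_singleton.mpr huv)]
            simp
          rw [hsum]
          -- u is near x, not near y; v is near y, not near x
          rw [hA, Finset.mem_filter] at hu
          rw [hB, Finset.mem_filter] at hv
          have hux : dist u x < Δ / 2 := hu.2
          have hvy : dist v y < Δ / 2 := hv.2
          have huN : u ∈ N := hu.1
          have hvN : v ∈ N := hv.1
          have huy : ¬ dist u y < Δ / 2 := by
            intro h
            have : u ∈ B := by rw [hB, Finset.mem_filter]; exact ⟨huN, h⟩
            rw [hBv, Finset.mem_singleton] at this
            exact huv this
          have hvx : ¬ dist v x < Δ / 2 := by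
            intro h
            have : v ∈ A := by rw [hA, Finset.mem_filter]; exact ⟨hvN, h⟩
            rw [hAu, Finset.mem_singleton] at this
            exact huv this.symm
          push_neg at huy hvx
          have hfu : f u = Δ / 2 - dist u x := by
            simp only [hf, min_eq_left hux.le, min_eq_right huy]
            rw [abs_of_nonpos (by linarith)]
            ring
          have hfv : f v = Δ / 2 - dist v y := by
            simp only [hf, min_eq_right hvx, min_eq_left hvy.le]
            rw [abs_of_nonneg (by linarith)]
          have hpuv : Δ < dist u v := hpack u huN v hvN huv
          have htri : dist u v ≤ dist u x + dist x y + dist y v :=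
            dist_triangle4 u x y v
          have hdyv : dist y v = dist v y := dist_comm y v
          rw [hfu, hfv]
          linarith
  -- main case split on N.card
  rcases Nat.lt_or_ge N.card 1 with hc0 | hc1
  · omega
  rcases Nat.lt_or_ge N.card 2 with hc1' | hc2
  · -- N.card = 1 : just need W2 > 0
    have hcard1 : N.card = 1 := by omega
    obtain ⟨a, b, hab⟩ := Fintype.exists_pair_of_one_lt_card (by omega : 1 < Fintype.card X)
    obtain ⟨w0⟩ := hG.isConnected.preconnected a b
    have hadj : ∃ c d : X, G.Adj c d := by
      cases w0 with
      | nil => exact absurd rfl hab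
      | cons h q => exact ⟨_, _, h⟩
    obtain ⟨c, d, hcd⟩ := hadj
    have hW2pos : 0 < W2 := by
      rw [hW2]
      apply Finset.sum_pos' (fun q _ => hW2nn q)
      refine ⟨(c, d), Finset.mem_univ _, ?_⟩
      simp only [if_pos hcd]
      exact dist_pos.2 hcd.ne
    have : 0 < 2 / Δ * (W2 / 2) := by positivity
    have h1 : 1 ≤ ⌈2 / Δ * (W2 / 2)⌉₊ := Nat.one_le_ceil_iff.2 this
    omega
  · -- N.card ≥ 2 : the main bound
    have key : (N.card : ℝ) * Δ ≤ W2 := by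
      have hper : ∀ u ∈ N, Δ ≤ ∑ p : X × X,
          (if G.Adj p.1 p.2 then
            |min (dist u p.1) (Δ / 2) - min (dist u p.2) (Δ / 2)| else 0) := by
        intro u hu
        obtain ⟨v, hv, hvu⟩ := Finset.exists_mem_ne hc2 u
        set h : X → ℝ := fun z => min (dist u z) (Δ / 2) with hh
        have hhu : h u = 0 := by
          simp only [hh, dist_self]
          exact min_eq_left (by linarith)
        have hhv : h v = Δ / 2 := by
          have : Δ < dist u v := hpack u hu v hv (Ne.symm hvu)
          simp only [hh]
          exact min_eq_right (by linarith)
        have habs : |h u - h v| = Δ / 2 := by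
          rw [hhu, hhv, zero_sub, abs_neg, abs_of_nonneg (by linarith)]
        have := tree_double_bound hG h u v
        rw [habs] at this
        calc Δ = 2 * (Δ / 2) := by ring
          _ ≤ _ := this
      calc (N.card : ℝ) * Δ = ∑ _u ∈ N, Δ := by
            rw [Finset.sum_const, nsmul_eq_mul]
        _ ≤ ∑ u ∈ N, ∑ p : X × X,
            (if G.Adj p.1 p.2 then
              |min (dist u p.1) (Δ / 2) - min (dist u p.2) (Δ / 2)| else 0) :=
            Finset.sum_le_sum hper
        _ = ∑ p : X × X, ∑ u ∈ N,
            (if G.Adj p.1 p.2 then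
              |min (dist u p.1) (Δ / 2) - min (dist u p.2) (Δ / 2)| else 0) :=
            Finset.sum_comm
        _ ≤ W2 := by
            rw [hW2]
            apply Finset.sum_le_sum
            intro p _
            by_cases hp : G.Adj p.1 p.2
            · simp only [if_pos hp]
              exact edge_bound p.1 p.2
            · simp [hp]
    have hcardle : (N.card : ℝ) ≤ 2 / Δ * (W2 / 2) := by
      have : 2 / Δ * (W2 / 2) = W2 / Δ := by field_simp
      rw [this, le_div_iff₀ hΔ]
      exact key
    have := hcardle.trans (Nat.le_ceil _)
    exact_mod_cast this
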